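/- Let 1 ≤ p < ∞, let m be an admissible weight with m(x,y) ≥ max(w(x)/w(y), w(y)/w(x)) and sup_{x,y∈U_i} m(x,y) ≤ C_m for all i, suppose R(x,y) = conj(R(y,x)) for all x,y, and choose points x_i ∈ U_i. Suppose ∫_X |R(x,y)| m(x,y) dμ(y) ≤ A₁ for all x, ∫_X |R(x,y)| m(x,y) dμ(x) ≤ A₁ for all y, and ∫_X osc(y,x) m(x,y) dμ(x) ≤ A₂ for all y. Let F ∈ L^p_w be such that for every x ∈ X the integral ∫_X R(x,y) F(y) dμ(y) converges absolutely and F(x) = ∫_X R(x,y) F(y) dμ(y). Then ‖ Σ_{i∈I} |F(x_i)| χ_{U_i} ‖_{L^p_w} ≤ N max( C_m A₁, A₁ + A₂ ) ‖F‖_{L^p_w}. (Sampling inequality (5.11) of Lemma 5.11 specialized to Y = L^p_w.) -/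

import Mathlib

open MeasureTheory
open scoped ENNReal NNReal

/-- The oscillation kernel `osc_{𝒰,Γ}(x,y) = sup_{z ∈ Q_y} |R(x,y) − Γ(y,z) R(x,z)|`,
where `Q_y = ⋃_{i : y ∈ U_i} U_i`. -/
noncomputable def osc {X I : Type*} (U : I → Set X) (R Γ : X → X → ℂ) (x y : X) : ℝ≥0∞ :=
  ⨆ z ∈ ⋃ i ∈ {i : I | y ∈ U i}, U i, (‖R x y - Γ y z * R x z‖₊ : ℝ≥0∞)

private lemma tsum_indicator_le_aux {I X : Type*} [Countable I] (U : I → Set X) (x : X) (N : ℕ)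
    (hN : {i : I | x ∈ U i}.encard ≤ N) :
    (∑' i, (U i).indicator (fun _ => (1:ℝ≥0∞)) x) ≤ N := by
  have h0 : (∑' i, (U i).indicator (fun _ => (1:ℝ≥0∞)) x)
      = ∑' i, ({i : I | x ∈ U i}).indicator (fun _ => (1:ℝ≥0∞)) i :=
    tsum_congr fun i => by by_cases h : x ∈ U i <;> simp [Set.indicator, h]
  rw [h0, ← tsum_subtype, ENNReal.tsum_set_one]
  exact_mod_cast ENat.toENNReal_le.2 hN

private lemma rpow_max_aux {a b : ℝ≥0∞} {p : ℝ} (hp : 1 ≤ p) :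
    (a ^ (p-1) * b) ^ (1/p) ≤ max a b := by
  have hp0 : (0:ℝ) < p := lt_of_lt_of_le one_pos hp
  have h1 : a ^ (p-1) * b ≤ (max a b) ^ (p-1) * max a b :=
    mul_le_mul' (ENNReal.rpow_le_rpow (le_max_left a b) (by linarith)) (le_max_right a b)
  have h2 : (max a b) ^ (p-1) * max a b ≤ (max a b) ^ p := by
    rcases eq_or_ne (max a b) 0 with h | h
    · rw [h, mul_zero]; exact zero_le
    · rcases eq_or_ne (max a b) ∞ with h' | h'
      · rw [h', ENNReal.top_rpow_of_pos hp0]; exact le_top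
      · refine le_of_eq ?_
        calc (max a b) ^ (p-1) * max a b = (max a b) ^ (p-1) * (max a b) ^ (1:ℝ) := by
              rw [ENNReal.rpow_one]
          _ = (max a b) ^ (p-1+1) := (ENNReal.rpow_add _ _ h h').symm
          _ = (max a b) ^ p := by rw [show p - 1 + 1 = p by ring]
  calc (a ^ (p-1) * b) ^ (1/p) ≤ ((max a b) ^ p) ^ (1/p) :=
        ENNReal.rpow_le_rpow (h1.trans h2) (by positivity)
    _ = max a b := by
        rw [← ENNReal.rpow_mul, mul_one_div_cancel hp0.ne', ENNReal.rpow_one]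

private lemma schur_aux {X : Type*} [MeasurableSpace X] {μ : Measure X} [SigmaFinite μ]
    {T : X → X → ℝ≥0∞} (hT : Measurable (Function.uncurry T))
    {f : X → ℝ≥0∞} (hf : Measurable f)
    {p : ℝ} (hp : 1 ≤ p) {Cr Cc : ℝ≥0∞}
    (hrow : ∀ x, ∫⁻ y, T x y ∂μ ≤ Cr) (hcol : ∀ y, ∫⁻ x, T x y ∂μ ≤ Cc) :
    ∫⁻ x, (∫⁻ y, T x y * f y ∂μ) ^ p ∂μ ≤ Cr ^ (p-1) * (Cc * ∫⁻ y, f y ^ p ∂μ) := by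
  have hp0 : (0:ℝ) < p := lt_of_lt_of_le one_pos hp
  have hTx : ∀ x, Measurable (T x) := fun x => hT.comp measurable_prodMk_left
  have hTy : ∀ y, Measurable (fun x => T x y) := fun y => hT.comp measurable_prodMk_right
  have hHold : ∀ x, (∫⁻ y, T x y * f y ∂μ) ^ p ≤ Cr ^ (p-1) * ∫⁻ y, T x y * f y ^ p ∂μ := by
    intro x
    rcases eq_or_lt_of_le hp with hp1 | hp1
    · rw [← hp1]
      simp [ENNReal.rpow_one]
    · have hpq : p.HolderConjugate (Real.conjExponent p) := Real.HolderConjugate.conjExponent hp1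
      set q := Real.conjExponent p with hqdef
      have hq0 : (0:ℝ) ≤ 1/q := hpq.symm.one_div_nonneg
      have hp0' : (0:ℝ) ≤ 1/p := hpq.one_div_nonneg
      have key := ENNReal.lintegral_mul_le_Lp_mul_Lq μ hpq.symm
        (f := fun y => T x y ^ (1/q)) (g := fun y => T x y ^ (1/p) * f y)
        ((hTx x).pow_const _).aemeasurable
        (((hTx x).pow_const _).mul hf).aemeasurable
      have e2 : ∫⁻ y, (T x y ^ (1/q)) ^ q ∂μ = ∫⁻ y, T x y ∂μ :=
        lintegral_congr fun y => by
          rw [← ENNReal.rpow_mul, one_div_mul_cancel (ne_of_gt hpq.symm.pos), ENNReal.rpow_one]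
      have e3 : ∫⁻ y, (T x y ^ (1/p) * f y) ^ p ∂μ = ∫⁻ y, T x y * f y ^ p ∂μ :=
        lintegral_congr fun y => by
          rw [ENNReal.mul_rpow_of_nonneg _ _ hp0.le, ← ENNReal.rpow_mul,
            one_div_mul_cancel hp0.ne', ENNReal.rpow_one]
      calc (∫⁻ y, T x y * f y ∂μ) ^ p
          ≤ ((∫⁻ y, T x y ∂μ) ^ (1/q) * (∫⁻ y, T x y * f y ^ p ∂μ) ^ (1/p)) ^ p := by
            apply ENNReal.rpow_le_rpow _ hp0.le
            calc ∫⁻ y, T x y * f y ∂μ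
                = ∫⁻ y, ((fun y => T x y ^ (1/q)) * fun y => T x y ^ (1/p) * f y) y ∂μ := by
                  apply lintegral_congr; intro y
                  rw [Pi.mul_apply, ← mul_assoc, ← ENNReal.rpow_add_of_nonneg _ _ hq0 hp0',
                    show 1/q + 1/p = 1 by
                      rw [one_div, one_div]; exact hpq.symm.inv_add_inv_eq_one,
                    ENNReal.rpow_one]
              _ ≤ _ := key
              _ = _ := by rw [e2, e3]
        _ = (∫⁻ y, T x y ∂μ) ^ (p/q) * ∫⁻ y, T x y * f y ^ p ∂μ := by
            rw [ENNReal.mul_rpow_of_nonneg _ _ hp0.le, ← ENNReal.rpow_mul, ← ENNReal.rpow_mul,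
              show 1/q * p = p/q by ring, show 1/p * p = 1 from one_div_mul_cancel hp0.ne',
              ENNReal.rpow_one]
        _ ≤ Cr ^ (p/q) * ∫⁻ y, T x y * f y ^ p ∂μ :=
            mul_le_mul_left (ENNReal.rpow_le_rpow (hrow x)
              (div_nonneg hp0.le hpq.symm.nonneg)) _
        _ = Cr ^ (p-1) * ∫⁻ y, T x y * f y ^ p ∂μ := by rw [hpq.div_conj_eq_sub_one]
  have hm1 : Measurable fun z : X × X => T z.1 z.2 * f z.2 ^ p :=
    hT.mul ((hf.comp measurable_snd).pow_const p)
  calc ∫⁻ x, (∫⁻ y, T x y * f y ∂μ) ^ p ∂μ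
      ≤ ∫⁻ x, Cr ^ (p-1) * ∫⁻ y, T x y * f y ^ p ∂μ ∂μ := lintegral_mono hHold
    _ = Cr ^ (p-1) * ∫⁻ x, ∫⁻ y, T x y * f y ^ p ∂μ ∂μ :=
        lintegral_const_mul _ hm1.lintegral_prod_right'
    _ = Cr ^ (p-1) * ∫⁻ y, ∫⁻ x, T x y * f y ^ p ∂μ ∂μ := by
        congr 1
        exact lintegral_lintegral_swap hm1.aemeasurable
    _ = Cr ^ (p-1) * ∫⁻ y, (∫⁻ x, T x y ∂μ) * f y ^ p ∂μ := by
        congr 1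
        exact lintegral_congr fun y => lintegral_mul_const _ (hTy y)
    _ ≤ Cr ^ (p-1) * ∫⁻ y, Cc * f y ^ p ∂μ := by
        apply mul_le_mul_right
        exact lintegral_mono fun y => mul_le_mul_left (hcol y) _
    _ = Cr ^ (p-1) * (Cc * ∫⁻ y, f y ^ p ∂μ) := by
        rw [lintegral_const_mul _ (hf.pow_const p)]

/-- **Sampling inequality (5.11) of Lemma 5.11 specialized to `Y = L^p_w`.**
If `F ∈ L^p_w` is reproduced by the kernel `R`, then
`‖Σ_i |F(x_i)| χ_{U_i}‖_{L^p_w} ≤ N max(C_m A₁, A₁ + A₂) ‖F‖_{L^p_w}`. -/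
theorem stmt_16
    {X : Type*} [MeasurableSpace X] (μ : Measure X)
    {I : Type*} [Countable I] (U : I → Set X)
    (hUmeas : ∀ i, MeasurableSet (U i))
    (hUpos : ∀ i, 0 < μ (U i)) (hUfin : ∀ i, μ (U i) < ∞)
    (hcov : ∀ x : X, ∃ i, x ∈ U i)
    (N : ℕ) (hN : ∀ x : X, {i : I | x ∈ U i}.encard ≤ N)
    (w : X → ℝ) (hw : ∀ x, 0 < w x) (hwm : Measurable w)
    (p : ℝ) (hp : 1 ≤ p)
    (m : X → X → ℝ) (hm1 : ∀ x y, 1 ≤ m x y) (hmsymm : ∀ x y, m x y = m y x)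
    (hmsub : ∀ x y z, m x y ≤ m x z * m z y) (hmmeas : Measurable (Function.uncurry m))
    (hmw : ∀ x y, max (w x / w y) (w y / w x) ≤ m x y)
    (Cm : ℝ) (hCm : ∀ i, ∀ x ∈ U i, ∀ y ∈ U i, m x y ≤ Cm)
    (R Γ : X → X → ℂ) (hRmeas : Measurable (Function.uncurry R))
    (hΓ : ∀ x y, ‖Γ x y‖ = 1)
    (hRsymm : ∀ x y, R x y = (starRingEnd ℂ) (R y x))
    (xi : I → X) (hxi : ∀ i, xi i ∈ U i)
    (A₁ A₂ : ℝ≥0∞)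
    (hA1 : ∀ x, ∫⁻ y, (‖R x y‖₊ : ℝ≥0∞) * ENNReal.ofReal (m x y) ∂μ ≤ A₁)
    (hA2 : ∀ y, ∫⁻ x, (‖R x y‖₊ : ℝ≥0∞) * ENNReal.ofReal (m x y) ∂μ ≤ A₁)
    (hA3 : ∀ y, ∫⁻ x, osc U R Γ y x * ENNReal.ofReal (m x y) ∂μ ≤ A₂)
    (F : X → ℂ) (hFm : Measurable F)
    (hFLp : (∫⁻ x, (‖F x‖₊ : ℝ≥0∞) ^ p * ENNReal.ofReal (w x) ^ p ∂μ) < ∞)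
    (hrep : ∀ x, Integrable (fun y => R x y * F y) μ ∧ F x = ∫ y, R x y * F y ∂μ) :
    (∫⁻ x, (∑' i, (‖F (xi i)‖₊ : ℝ≥0∞) * (U i).indicator (fun _ => (1 : ℝ≥0∞)) x) ^ p
        * ENNReal.ofReal (w x) ^ p ∂μ) ^ (1/p)
      ≤ N * max (ENNReal.ofReal Cm * A₁) (A₁ + A₂)
        * (∫⁻ x, (‖F x‖₊ : ℝ≥0∞) ^ p * ENNReal.ofReal (w x) ^ p ∂μ) ^ (1/p) := by
  classical
  have hp0 : (0:ℝ) < p := lt_of_lt_of_le one_pos hp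
  haveI hsf : SigmaFinite μ := by
    refine Measure.sigmaFinite_of_countable (Set.countable_range U) ?_ ?_
    · rintro s ⟨i, rfl⟩; exact hUfin i
    · apply Set.eq_univ_of_forall
      intro x; obtain ⟨i, hi⟩ := hcov x
      exact ⟨U i, ⟨i, rfl⟩, hi⟩
  set T : X → X → ℝ≥0∞ := fun x y =>
    (∑' i, (U i).indicator (fun _ => (1:ℝ≥0∞)) x * (‖R (xi i) y‖₊ : ℝ≥0∞))
      * ENNReal.ofReal (m x y) with hTdef
  set f : X → ℝ≥0∞ := fun y => (‖F y‖₊ : ℝ≥0∞) * ENNReal.ofReal (w y) with hfdef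
  -- measurability
  have hTm : Measurable (Function.uncurry T) := by
    apply Measurable.mul
    · apply Measurable.ennreal_tsum
      intro i
      exact ((measurable_const.indicator (hUmeas i)).comp measurable_fst).mul
        ((hRmeas.comp (measurable_const.prodMk measurable_snd)).enorm)
    · exact hmmeas.ennreal_ofReal
  have hfm : Measurable f := hFm.enorm.mul hwm.ennreal_ofReal
  have hRym : ∀ x : X, Measurable fun y => (‖R x y‖₊ : ℝ≥0∞) := fun x =>
    (hRmeas.comp measurable_prodMk_left).enorm
  have hmym : ∀ x : X, Measurable fun y => ENNReal.ofReal (m x y) := fun x =>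
    (hmmeas.comp measurable_prodMk_left).ennreal_ofReal
  have hsumN : ∀ x : X, (∑' i, (U i).indicator (fun _ => (1:ℝ≥0∞)) x) ≤ N :=
    fun x => tsum_indicator_le_aux U x N (hN x)
  -- reproducing bound
  have hFbd : ∀ x, (‖F x‖₊ : ℝ≥0∞) ≤ ∫⁻ y, (‖R x y‖₊:ℝ≥0∞) * ‖F y‖₊ ∂μ := by
    intro x
    calc ((‖F x‖₊:ℝ≥0) : ℝ≥0∞) = (‖∫ y, R x y * F y ∂μ‖₊ : ℝ≥0∞) := by rw [← (hrep x).2]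
      _ ≤ ∫⁻ y, (‖R x y * F y‖₊:ℝ≥0∞) ∂μ := enorm_integral_le_lintegral_enorm _
      _ = ∫⁻ y, (‖R x y‖₊:ℝ≥0∞) * ‖F y‖₊ ∂μ := lintegral_congr fun y => by
            rw [nnnorm_mul, ENNReal.coe_mul]
  have hWle : ∀ x y, ENNReal.ofReal (w x) ≤ ENNReal.ofReal (m x y) * ENNReal.ofReal (w y) := by
    intro x y
    rw [← ENNReal.ofReal_mul (le_trans zero_le_one (hm1 x y))]
    exact ENNReal.ofReal_le_ofReal ((div_le_iff₀ (hw y)).1 (le_trans (le_max_left _ _) (hmw x y)))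
  -- pointwise bound
  have hPoint : ∀ x, (∑' i, (‖F (xi i)‖₊ : ℝ≥0∞) * (U i).indicator (fun _ => (1:ℝ≥0∞)) x)
      * ENNReal.ofReal (w x) ≤ ∫⁻ y, T x y * f y ∂μ := by
    intro x
    have step1 : ∀ i, (‖F (xi i)‖₊ : ℝ≥0∞) * (U i).indicator (fun _ => (1:ℝ≥0∞)) x
        * ENNReal.ofReal (w x)
        ≤ ∫⁻ y, (U i).indicator (fun _ => (1:ℝ≥0∞)) x * (‖R (xi i) y‖₊:ℝ≥0∞)
            * (ENNReal.ofReal (m x y) * f y) ∂μ := by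
      intro i
      by_cases hx : x ∈ U i
      · rw [Set.indicator_of_mem hx]
        calc (‖F (xi i)‖₊ : ℝ≥0∞) * 1 * ENNReal.ofReal (w x)
            ≤ (∫⁻ y, (‖R (xi i) y‖₊:ℝ≥0∞) * ‖F y‖₊ ∂μ) * ENNReal.ofReal (w x) := by
              apply mul_le_mul_left
              rw [mul_one]; exact hFbd (xi i)
          _ = ∫⁻ y, (‖R (xi i) y‖₊:ℝ≥0∞) * ‖F y‖₊ * ENNReal.ofReal (w x) ∂μ :=
              (lintegral_mul_const _ ((hRym (xi i)).mul hFm.enorm)).symm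
          _ ≤ ∫⁻ y, 1 * (‖R (xi i) y‖₊:ℝ≥0∞) * (ENNReal.ofReal (m x y) * f y) ∂μ := by
              apply lintegral_mono; intro y
              simp only [hfdef]
              calc (‖R (xi i) y‖₊:ℝ≥0∞) * ‖F y‖₊ * ENNReal.ofReal (w x)
                  ≤ (‖R (xi i) y‖₊:ℝ≥0∞) * ‖F y‖₊
                      * (ENNReal.ofReal (m x y) * ENNReal.ofReal (w y)) :=
                    mul_le_mul_right (hWle x y) _
                _ = 1 * (‖R (xi i) y‖₊:ℝ≥0∞)
                      * (ENNReal.ofReal (m x y) * ((‖F y‖₊:ℝ≥0∞) * ENNReal.ofReal (w y))) := by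
                    ring
      · rw [Set.indicator_of_notMem hx]
        simp
    calc (∑' i, (‖F (xi i)‖₊ : ℝ≥0∞) * (U i).indicator (fun _ => (1:ℝ≥0∞)) x)
          * ENNReal.ofReal (w x)
        = ∑' i, (‖F (xi i)‖₊ : ℝ≥0∞) * (U i).indicator (fun _ => (1:ℝ≥0∞)) x
            * ENNReal.ofReal (w x) := ENNReal.tsum_mul_right.symm
      _ ≤ ∑' i, ∫⁻ y, (U i).indicator (fun _ => (1:ℝ≥0∞)) x * (‖R (xi i) y‖₊:ℝ≥0∞)
            * (ENNReal.ofReal (m x y) * f y) ∂μ := ENNReal.tsum_le_tsum step1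
      _ = ∫⁻ y, ∑' i, (U i).indicator (fun _ => (1:ℝ≥0∞)) x * (‖R (xi i) y‖₊:ℝ≥0∞)
            * (ENNReal.ofReal (m x y) * f y) ∂μ :=
          (lintegral_tsum fun i =>
            ((measurable_const.mul (hRym (xi i))).mul ((hmym x).mul hfm)).aemeasurable).symm
      _ = ∫⁻ y, T x y * f y ∂μ := by
          apply lintegral_congr; intro y
          simp only [hTdef]
          rw [mul_assoc, ← ENNReal.tsum_mul_right]
  -- row bound
  have hRow : ∀ x, ∫⁻ y, T x y ∂μ ≤ N * (ENNReal.ofReal Cm * A₁) := by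
    intro x
    have expand : ∫⁻ y, T x y ∂μ
        = ∑' i, (U i).indicator (fun _ => (1:ℝ≥0∞)) x
            * ∫⁻ y, (‖R (xi i) y‖₊:ℝ≥0∞) * ENNReal.ofReal (m x y) ∂μ := by
      calc ∫⁻ y, T x y ∂μ
          = ∫⁻ y, ∑' i, (U i).indicator (fun _ => (1:ℝ≥0∞)) x
              * ((‖R (xi i) y‖₊:ℝ≥0∞) * ENNReal.ofReal (m x y)) ∂μ := by
            apply lintegral_congr; intro y
            simp only [hTdef]
            rw [← ENNReal.tsum_mul_right]
            exact tsum_congr fun i => mul_assoc _ _ _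
        _ = ∑' i, ∫⁻ y, (U i).indicator (fun _ => (1:ℝ≥0∞)) x
              * ((‖R (xi i) y‖₊:ℝ≥0∞) * ENNReal.ofReal (m x y)) ∂μ :=
            lintegral_tsum fun i =>
              (measurable_const.mul ((hRym (xi i)).mul (hmym x))).aemeasurable
        _ = _ := tsum_congr fun i => lintegral_const_mul _ ((hRym (xi i)).mul (hmym x))
    rw [expand]
    have bound_i : ∀ i, (U i).indicator (fun _ => (1:ℝ≥0∞)) x
        * ∫⁻ y, (‖R (xi i) y‖₊:ℝ≥0∞) * ENNReal.ofReal (m x y) ∂μ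
        ≤ (U i).indicator (fun _ => (1:ℝ≥0∞)) x * (ENNReal.ofReal Cm * A₁) := by
      intro i
      by_cases hx : x ∈ U i
      · apply mul_le_mul_right
        have hCm0 : (0:ℝ) ≤ Cm :=
          le_trans (le_trans zero_le_one (hm1 x (xi i))) (hCm i x hx (xi i) (hxi i))
        calc ∫⁻ y, (‖R (xi i) y‖₊:ℝ≥0∞) * ENNReal.ofReal (m x y) ∂μ
            ≤ ∫⁻ y, ENNReal.ofReal Cm
                * ((‖R (xi i) y‖₊:ℝ≥0∞) * ENNReal.ofReal (m (xi i) y)) ∂μ := by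
              apply lintegral_mono; intro y
              have h1 : ENNReal.ofReal (m x y)
                  ≤ ENNReal.ofReal Cm * ENNReal.ofReal (m (xi i) y) := by
                rw [← ENNReal.ofReal_mul hCm0]
                refine ENNReal.ofReal_le_ofReal (le_trans (hmsub x y (xi i)) ?_)
                exact mul_le_mul_of_nonneg_right (hCm i x hx (xi i) (hxi i))
                  (le_trans zero_le_one (hm1 (xi i) y))
              calc (‖R (xi i) y‖₊:ℝ≥0∞) * ENNReal.ofReal (m x y)
                  ≤ (‖R (xi i) y‖₊:ℝ≥0∞)
                      * (ENNReal.ofReal Cm * ENNReal.ofReal (m (xi i) y)) :=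
                    mul_le_mul_right h1 _
                _ = ENNReal.ofReal Cm
                      * ((‖R (xi i) y‖₊:ℝ≥0∞) * ENNReal.ofReal (m (xi i) y)) := by ring
          _ = ENNReal.ofReal Cm * ∫⁻ y, (‖R (xi i) y‖₊:ℝ≥0∞) * ENNReal.ofReal (m (xi i) y) ∂μ :=
              lintegral_const_mul _ ((hRym (xi i)).mul (hmym (xi i)))
          _ ≤ ENNReal.ofReal Cm * A₁ := mul_le_mul_right (hA1 (xi i)) _
      · rw [Set.indicator_of_notMem hx]
        simp
    calc _ ≤ ∑' i, (U i).indicator (fun _ => (1:ℝ≥0∞)) x * (ENNReal.ofReal Cm * A₁) :=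
          ENNReal.tsum_le_tsum bound_i
      _ = (∑' i, (U i).indicator (fun _ => (1:ℝ≥0∞)) x) * (ENNReal.ofReal Cm * A₁) :=
          ENNReal.tsum_mul_right
      _ ≤ N * (ENNReal.ofReal Cm * A₁) := mul_le_mul_left (hsumN x) _
  -- the key estimate using oscillation
  have hRle : ∀ i x, x ∈ U i → ∀ y,
      (‖R (xi i) y‖₊ : ℝ≥0∞) ≤ (‖R x y‖₊:ℝ≥0∞) + osc U R Γ y x := by
    intro i x hx y
    have hreal : ‖R y (xi i)‖ ≤ ‖R y x‖ + ‖R y x - Γ x (xi i) * R y (xi i)‖ := by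
      calc ‖R y (xi i)‖ = ‖Γ x (xi i) * R y (xi i)‖ := by rw [norm_mul, hΓ, one_mul]
        _ = ‖R y x - (R y x - Γ x (xi i) * R y (xi i))‖ := by congr 1; ring
        _ ≤ _ := norm_sub_le _ _
    have h1 : (‖R (xi i) y‖₊:ℝ≥0∞) = (‖R y (xi i)‖₊:ℝ≥0∞) := by
      rw [hRsymm (xi i) y, RCLike.nnnorm_conj]
    have h2 : (‖R x y‖₊:ℝ≥0∞) = (‖R y x‖₊:ℝ≥0∞) := by
      rw [hRsymm x y, RCLike.nnnorm_conj]
    have h3 : (‖R y x - Γ x (xi i) * R y (xi i)‖₊ : ℝ≥0∞) ≤ osc U R Γ y x := by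
      have hmem : xi i ∈ ⋃ j ∈ {j : I | x ∈ U j}, U j :=
        Set.mem_biUnion (show i ∈ {j : I | x ∈ U j} from hx) (hxi i)
      exact le_iSup₂ (f := fun z (_ : z ∈ ⋃ j ∈ {j : I | x ∈ U j}, U j) =>
        (‖R y x - Γ x z * R y z‖₊ : ℝ≥0∞)) (xi i) hmem
    rw [h1, h2]
    calc (‖R y (xi i)‖₊:ℝ≥0∞)
        ≤ (‖R y x‖₊:ℝ≥0∞) + (‖R y x - Γ x (xi i) * R y (xi i)‖₊:ℝ≥0∞) := by
          rw [← ENNReal.coe_add]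
          exact ENNReal.coe_le_coe.2 (by
            rw [← NNReal.coe_le_coe]
            push_cast
            exact hreal)
      _ ≤ _ := add_le_add_right h3 _
  -- column bound
  have hCol : ∀ y, ∫⁻ x, T x y ∂μ ≤ N * (A₁ + A₂) := by
    intro y
    have hptw : ∀ x, T x y
        ≤ N * (((‖R x y‖₊:ℝ≥0∞) + osc U R Γ y x) * ENNReal.ofReal (m x y)) := by
      intro x
      simp only [hTdef]
      calc (∑' i, (U i).indicator (fun _ => (1:ℝ≥0∞)) x * (‖R (xi i) y‖₊ : ℝ≥0∞))
            * ENNReal.ofReal (m x y)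
          ≤ ((∑' i, (U i).indicator (fun _ => (1:ℝ≥0∞)) x)
              * ((‖R x y‖₊:ℝ≥0∞) + osc U R Γ y x)) * ENNReal.ofReal (m x y) := by
            apply mul_le_mul_left
            rw [← ENNReal.tsum_mul_right]
            refine ENNReal.tsum_le_tsum fun i => ?_
            by_cases hx : x ∈ U i
            · simp only [Set.indicator_of_mem hx, one_mul]
              exact hRle i x hx y
            · simp [Set.indicator_of_notMem hx]
        _ ≤ ((N : ℝ≥0∞) * ((‖R x y‖₊:ℝ≥0∞) + osc U R Γ y x)) * ENNReal.ofReal (m x y) :=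
            mul_le_mul_left (mul_le_mul_left (hsumN x) _) _
        _ = N * (((‖R x y‖₊:ℝ≥0∞) + osc U R Γ y x) * ENNReal.ofReal (m x y)) :=
            mul_assoc _ _ _
    calc ∫⁻ x, T x y ∂μ
        ≤ ∫⁻ x, N * (((‖R x y‖₊:ℝ≥0∞) + osc U R Γ y x) * ENNReal.ofReal (m x y)) ∂μ :=
          lintegral_mono hptw
      _ = N * ∫⁻ x, ((‖R x y‖₊:ℝ≥0∞) + osc U R Γ y x) * ENNReal.ofReal (m x y) ∂μ :=
          lintegral_const_mul' _ _ (ENNReal.natCast_ne_top N)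
      _ = N * ∫⁻ x, (‖R x y‖₊:ℝ≥0∞) * ENNReal.ofReal (m x y)
            + osc U R Γ y x * ENNReal.ofReal (m x y) ∂μ := by
          congr 1; exact lintegral_congr fun x => add_mul _ _ _
      _ = N * ((∫⁻ x, (‖R x y‖₊:ℝ≥0∞) * ENNReal.ofReal (m x y) ∂μ)
            + ∫⁻ x, osc U R Γ y x * ENNReal.ofReal (m x y) ∂μ) := by
          congr 1
          exact lintegral_add_left
            (((hRmeas.comp measurable_prodMk_right).enorm).mul
              ((hmmeas.comp measurable_prodMk_right).ennreal_ofReal)) _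
      _ ≤ N * (A₁ + A₂) := mul_le_mul_right (add_le_add (hA2 y) (hA3 y)) _
  -- apply Schur
  have hSchur := schur_aux hTm hfm hp hRow hCol
  have hLHS : ∫⁻ x, (∑' i, (‖F (xi i)‖₊ : ℝ≥0∞) * (U i).indicator (fun _ => (1:ℝ≥0∞)) x) ^ p
      * ENNReal.ofReal (w x) ^ p ∂μ
      = ∫⁻ x, ((∑' i, (‖F (xi i)‖₊ : ℝ≥0∞) * (U i).indicator (fun _ => (1:ℝ≥0∞)) x)
          * ENNReal.ofReal (w x)) ^ p ∂μ :=
    lintegral_congr fun x => (ENNReal.mul_rpow_of_nonneg _ _ hp0.le).symm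
  have hRHS : ∫⁻ x, (‖F x‖₊ : ℝ≥0∞) ^ p * ENNReal.ofReal (w x) ^ p ∂μ = ∫⁻ x, f x ^ p ∂μ :=
    lintegral_congr fun x => by
      simp only [hfdef]
      exact (ENNReal.mul_rpow_of_nonneg _ _ hp0.le).symm
  rw [hLHS, hRHS]
  calc (∫⁻ x, ((∑' i, (‖F (xi i)‖₊ : ℝ≥0∞) * (U i).indicator (fun _ => (1:ℝ≥0∞)) x)
          * ENNReal.ofReal (w x)) ^ p ∂μ) ^ (1/p)
      ≤ (∫⁻ x, (∫⁻ y, T x y * f y ∂μ) ^ p ∂μ) ^ (1/p) :=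
        ENNReal.rpow_le_rpow
          (lintegral_mono fun x => ENNReal.rpow_le_rpow (hPoint x) hp0.le) (by positivity)
    _ ≤ (((N : ℝ≥0∞) * (ENNReal.ofReal Cm * A₁)) ^ (p-1)
          * (((N : ℝ≥0∞) * (A₁ + A₂)) * ∫⁻ y, f y ^ p ∂μ)) ^ (1/p) :=
        ENNReal.rpow_le_rpow hSchur (by positivity)
    _ = (((N : ℝ≥0∞) * (ENNReal.ofReal Cm * A₁)) ^ (p-1) * ((N : ℝ≥0∞) * (A₁ + A₂))) ^ (1/p)
          * (∫⁻ y, f y ^ p ∂μ) ^ (1/p) := by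
        rw [← mul_assoc, ENNReal.mul_rpow_of_nonneg _ _ (by positivity)]
    _ ≤ (N : ℝ≥0∞) * max (ENNReal.ofReal Cm * A₁) (A₁ + A₂) * (∫⁻ y, f y ^ p ∂μ) ^ (1/p) := by
        apply mul_le_mul_left
        have h1 : (N : ℝ≥0∞) * (ENNReal.ofReal Cm * A₁)
            ≤ (N : ℝ≥0∞) * max (ENNReal.ofReal Cm * A₁) (A₁+A₂) :=
          mul_le_mul_right (le_max_left _ _) _
        have h2 : (N : ℝ≥0∞) * (A₁ + A₂)
            ≤ (N : ℝ≥0∞) * max (ENNReal.ofReal Cm * A₁) (A₁+A₂) :=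
          mul_le_mul_right (le_max_right _ _) _
        calc (((N : ℝ≥0∞) * (ENNReal.ofReal Cm * A₁)) ^ (p-1) * ((N : ℝ≥0∞) * (A₁ + A₂))) ^ (1/p)
            ≤ (((N : ℝ≥0∞) * max (ENNReal.ofReal Cm * A₁) (A₁+A₂)) ^ (p-1)
                * ((N : ℝ≥0∞) * max (ENNReal.ofReal Cm * A₁) (A₁+A₂))) ^ (1/p) :=
              ENNReal.rpow_le_rpow
                (mul_le_mul' (ENNReal.rpow_le_rpow h1 (by linarith)) h2) (by positivity)
          _ ≤ _ := (rpow_max_aux hp).trans_eq (max_self _)
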